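/- For x ≥ 0, the Gaussian tail satisfies ∫_x^∞ (1/√(2π)) e^{−t²/2} dt ≤ (1/2) e^{−x²/2}, and for any β > 1 and all x ∈ ℝ, ∫_x^∞ (1/√(2π)) e^{−t²/2} dt ≥ (√(2e(β−1))/(2β√π)) e^{−βx²/2}. -/

import Mathlib

open MeasureTheory Real Set Filter Topology

lemma key_pointwise {β : ℝ} (hβ : 1 < β) (t : ℝ) :
    Real.sqrt (2 * Real.exp 1 * (β - 1)) / (2 * β * Real.sqrt Real.pi)
      * (β * t * Real.exp (-β * t ^ 2 / 2))
    ≤ (Real.sqrt (2 * Real.pi))⁻¹ * Real.exp (-t ^ 2 / 2) := by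
  have hβ0 : (0:ℝ) < β := by linarith
  have hπ : (0:ℝ) < Real.pi := Real.pi_pos
  have hsπ : (0:ℝ) < Real.sqrt Real.pi := Real.sqrt_pos.mpr hπ
  have hα0 : 0 ≤ Real.sqrt (2 * Real.exp 1 * (β - 1)) / (2 * β * Real.sqrt Real.pi) :=
    div_nonneg (Real.sqrt_nonneg _) (by positivity)
  rcases le_or_gt t 0 with ht | ht
  · have h1 : Real.sqrt (2 * Real.exp 1 * (β - 1)) / (2 * β * Real.sqrt Real.pi)
        * (β * t * Real.exp (-β * t ^ 2 / 2)) ≤ 0 := by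
      apply mul_nonpos_of_nonneg_of_nonpos hα0
      have : β * t ≤ 0 := mul_nonpos_of_nonneg_of_nonpos hβ0.le ht
      exact mul_nonpos_of_nonpos_of_nonneg this (Real.exp_nonneg _)
    exact h1.trans (by positivity)
  · set a := β - 1 with ha
    have ha0 : (0:ℝ) < a := by rw [ha]; linarith
    have key : Real.sqrt (Real.exp 1 * a) * t ≤ Real.exp (a * t ^ 2 / 2) := by
      have e1 : (Real.exp (a * t ^ 2 / 2)) ^ 2 = Real.exp (a * t ^ 2) := by
        rw [pow_two, ← Real.exp_add]; ring_nf
      have e2 : (Real.sqrt (Real.exp 1 * a) * t) ^ 2 = Real.exp 1 * a * t ^ 2 := by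
        rw [mul_pow, Real.sq_sqrt (by positivity)]
      have h2 : (Real.sqrt (Real.exp 1 * a) * t) ^ 2 ≤ (Real.exp (a * t ^ 2 / 2)) ^ 2 := by
        rw [e1, e2]
        set s := a * t ^ 2 with hsdef
        have hs0 : 0 ≤ s := by positivity
        have h3 : s ≤ Real.exp (s - 1) := by
          have := Real.add_one_le_exp (s - 1); linarith
        calc Real.exp 1 * a * t ^ 2 = Real.exp 1 * s := by rw [hsdef]; ring
          _ ≤ Real.exp 1 * Real.exp (s - 1) := by nlinarith [Real.exp_pos (1:ℝ)]
          _ = Real.exp s := by rw [← Real.exp_add]; ring_nf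
      exact le_of_pow_le_pow_left₀ two_ne_zero (Real.exp_pos _).le h2
    have h2π : Real.sqrt (2 * Real.pi) = Real.sqrt 2 * Real.sqrt Real.pi :=
      Real.sqrt_mul (by norm_num) _
    have hexp : Real.exp (-t ^ 2 / 2) = Real.exp (-β * t ^ 2 / 2) * Real.exp (a * t ^ 2 / 2) := by
      rw [← Real.exp_add, ha]; ring_nf
    have hsqrt2ea : Real.sqrt (2 * Real.exp 1 * a)
        = Real.sqrt 2 * Real.sqrt (Real.exp 1 * a) := by
      rw [mul_assoc, Real.sqrt_mul (by norm_num)]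
    rw [hexp, hsqrt2ea, h2π]
    have hE : (0:ℝ) < Real.exp (-β * t ^ 2 / 2) := Real.exp_pos _
    rw [div_mul_eq_mul_div, div_le_iff₀ (by positivity)]
    rw [inv_mul_eq_div, div_mul_eq_mul_div, le_div_iff₀ (by positivity)]
    have hs2 : Real.sqrt 2 * Real.sqrt 2 = 2 := Real.mul_self_sqrt (by norm_num)
    have expand : Real.sqrt 2 * Real.sqrt (Real.exp 1 * a) * (β * t * Real.exp (-β * t ^ 2 / 2))
        * (Real.sqrt 2 * Real.sqrt Real.pi)
        = 2 * β * Real.sqrt Real.pi * Real.exp (-β * t ^ 2 / 2)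
          * (Real.sqrt (Real.exp 1 * a) * t) := by
      linear_combination (Real.sqrt (Real.exp 1 * a) * (β * t * Real.exp (-β * t ^ 2 / 2)) * Real.sqrt Real.pi) * hs2
    rw [expand]
    have hmain : 2 * β * Real.sqrt Real.pi * Real.exp (-β * t ^ 2 / 2)
          * (Real.sqrt (Real.exp 1 * a) * t)
        ≤ 2 * β * Real.sqrt Real.pi * Real.exp (-β * t ^ 2 / 2)
          * Real.exp (a * t ^ 2 / 2) :=
      mul_le_mul_of_nonneg_left key (by positivity)
    exact hmain.trans_eq (by ring)

theorem gaussian_tail_two_sided_bounds :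
    (∀ x : ℝ, 0 ≤ x →
      ∫ t in Set.Ioi x, (Real.sqrt (2 * Real.pi))⁻¹ * Real.exp (-t ^ 2 / 2)
        ≤ (1 / 2) * Real.exp (-x ^ 2 / 2)) ∧
    (∀ β : ℝ, 1 < β → ∀ x : ℝ,
      Real.sqrt (2 * Real.exp 1 * (β - 1)) / (2 * β * Real.sqrt Real.pi)
          * Real.exp (-β * x ^ 2 / 2)
        ≤ ∫ t in Set.Ioi x, (Real.sqrt (2 * Real.pi))⁻¹ * Real.exp (-t ^ 2 / 2)) := by
  have hπ : (0:ℝ) < Real.pi := Real.pi_pos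
  have hintφ : Integrable (fun t : ℝ => (Real.sqrt (2 * Real.pi))⁻¹ * Real.exp (-t ^ 2 / 2)) := by
    have h1 : Integrable (fun t : ℝ => Real.exp (-(1/2 : ℝ) * t ^ 2)) :=
      integrable_exp_neg_mul_sq (by norm_num)
    have h2 := h1.const_mul ((Real.sqrt (2 * Real.pi))⁻¹)
    refine h2.congr (Eventually.of_forall fun t => ?_)
    ring_nf
  constructor
  · intro x hx
    have hshift : Integrable (fun t : ℝ =>
        (Real.sqrt (2 * Real.pi))⁻¹ * Real.exp (-x ^ 2 / 2) * Real.exp (-(1/2:ℝ) * (t - x) ^ 2)) := by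
      have h1 : Integrable (fun t : ℝ => Real.exp (-(1/2 : ℝ) * t ^ 2)) :=
        integrable_exp_neg_mul_sq (by norm_num)
      exact (h1.comp_sub_right x).const_mul _
    have hmono : ∫ t in Set.Ioi x, (Real.sqrt (2 * Real.pi))⁻¹ * Real.exp (-t ^ 2 / 2)
        ≤ ∫ t in Set.Ioi x,
            (Real.sqrt (2 * Real.pi))⁻¹ * Real.exp (-x ^ 2 / 2) * Real.exp (-(1/2:ℝ) * (t - x) ^ 2) := by
      apply setIntegral_mono_on hintφ.integrableOn hshift.integrableOn measurableSet_Ioi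
      intro t ht
      have ht' : x < t := ht
      rw [mul_assoc, ← Real.exp_add]
      apply mul_le_mul_of_nonneg_left _ (by positivity)
      apply Real.exp_le_exp.mpr
      nlinarith
    refine hmono.trans ?_
    rw [integral_const_mul]
    have htrans : ∫ t in Set.Ioi x, Real.exp (-(1/2:ℝ) * (t - x) ^ 2)
        = ∫ u in Set.Ioi (0:ℝ), Real.exp (-(1/2:ℝ) * u ^ 2) := by
      have hm := MeasurableEmbedding.setIntegral_map (μ := (volume : Measure ℝ))
        (measurableEmbedding_addRight x)
        (g := fun t : ℝ => Real.exp (-(1/2:ℝ) * (t - x) ^ 2)) (s := Set.Ioi x)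
      rw [map_add_right_eq_self volume x] at hm
      rw [hm]
      have hset : (fun u : ℝ => u + x) ⁻¹' Set.Ioi x = Set.Ioi (0:ℝ) := by
        ext u; simp [Set.mem_Ioi]
      rw [hset]
      refine setIntegral_congr_fun measurableSet_Ioi fun u _ => ?_
      simp
    rw [htrans, integral_gaussian_Ioi]
    have h12 : Real.sqrt (Real.pi / (1/2 : ℝ)) = Real.sqrt (2 * Real.pi) := by
      norm_num [mul_comm]
    rw [h12]
    have hs : Real.sqrt (2 * Real.pi) ≠ 0 := by positivity
    have heq : (Real.sqrt (2 * Real.pi))⁻¹ * Real.exp (-x ^ 2 / 2) * (Real.sqrt (2 * Real.pi) / 2)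
        = (1 / 2) * Real.exp (-x ^ 2 / 2) := by
      field_simp
    exact heq.le
  · intro β hβ x
    have hβ0 : (0:ℝ) < β := by linarith
    set α := Real.sqrt (2 * Real.exp 1 * (β - 1)) / (2 * β * Real.sqrt Real.pi) with hα
    have hint' : IntegrableOn (fun t : ℝ => α * (β * t * Real.exp (-β * t ^ 2 / 2))) (Ioi x) := by
      have h1 : Integrable (fun t : ℝ => t * Real.exp (-(β/2) * t ^ 2)) :=
        integrable_mul_exp_neg_mul_sq (by positivity)
      have h2 : Integrable (fun t : ℝ => α * (β * t * Real.exp (-β * t ^ 2 / 2))) := by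
        refine ((h1.const_mul β).const_mul α).congr (Eventually.of_forall fun t => ?_)
        ring_nf
      exact h2.integrableOn
    have hFTC : ∫ t in Set.Ioi x, α * (β * t * Real.exp (-β * t ^ 2 / 2))
        = α * Real.exp (-β * x ^ 2 / 2) := by
      have hderiv : ∀ t ∈ Ici x, HasDerivAt (fun t : ℝ => -(α * Real.exp (-β * t ^ 2 / 2)))
          (α * (β * t * Real.exp (-β * t ^ 2 / 2))) t := by
        intro t _
        have h1 : HasDerivAt (fun t : ℝ => -β * t ^ 2 / 2) (-β * t) t := by
          have h := ((hasDerivAt_pow 2 t).const_mul (-β)).div_const 2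
          exact h.congr_deriv (by push_cast; ring)
        have h2 := (h1.exp.const_mul α).neg
        exact h2.congr_deriv (by ring)
      have h1 : Tendsto (fun t : ℝ => -β * t ^ 2 / 2) atTop atBot := by
        have h2 : Tendsto (fun t : ℝ => (-β/2) * t ^ 2) atTop atBot :=
          (tendsto_const_mul_atBot_of_neg (by linarith)).mpr (tendsto_pow_atTop two_ne_zero)
        exact h2.congr fun t => by ring
      have htend0 : Tendsto (fun t : ℝ => Real.exp (-β * t ^ 2 / 2)) atTop (𝓝 0) :=
        Real.tendsto_exp_atBot.comp h1
      have htend : Tendsto (fun t : ℝ => -(α * Real.exp (-β * t ^ 2 / 2))) atTop (𝓝 0) := by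
        have h3 := (htend0.const_mul α).neg
        simpa using h3
      have h4 := integral_Ioi_of_hasDerivAt_of_tendsto' hderiv hint' htend
      rw [h4]; ring
    rw [← hFTC]
    apply setIntegral_mono_on hint' hintφ.integrableOn measurableSet_Ioi
    intro t _
    exact key_pointwise hβ t
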